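/- Let R be a reverse homogeneous equidepth step bisimulation between stable configuration structures C and D. If R(X, Y), then for every n ∈ ℕ, R(X_{≤n}, Y_{≤n}), where X_{≤n} is the set of events of X of depth at most n. -/

import Mathlib

universe u v

/-- A configuration structure over event type `E` and label alphabet `L`:
a family of finite sets of events (configurations) with a labelling. -/
structure CS (E : Type u) (L : Type v) where
  C : Set (Set E)
  finite : ∀ X ∈ C, X.Finite
  label : E → L

namespace CS

variable {E E₁ E₂ : Type u} {L : Type v}

/-- Stability: rooted, connected, closed under bounded unions and intersections. -/
def IsStable (𝒞 : CS E L) : Prop :=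
  ∅ ∈ 𝒞.C ∧
  (∀ X ∈ 𝒞.C, X ≠ ∅ → ∃ e ∈ X, X \ {e} ∈ 𝒞.C) ∧
  (∀ X ∈ 𝒞.C, ∀ Y ∈ 𝒞.C, ∀ Z ∈ 𝒞.C, X ∪ Y ⊆ Z → X ∪ Y ∈ 𝒞.C) ∧
  (∀ X ∈ 𝒞.C, ∀ Y ∈ 𝒞.C, ∀ Z ∈ 𝒞.C, X ∪ Y ⊆ Z → X ∩ Y ∈ 𝒞.C)

/-- Causality: `d ≤_X e` iff every sub-configuration of `X` containing `e` contains `d`. -/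
def le (𝒞 : CS E L) (X : Set E) (d e : E) : Prop :=
  ∀ Y ∈ 𝒞.C, Y ⊆ X → e ∈ Y → d ∈ Y

/-- Strict causality `d <_X e`. -/
def lt (𝒞 : CS E L) (X : Set E) (d e : E) : Prop :=
  le 𝒞 X d e ∧ d ≠ e

/-- Concurrency within a configuration. -/
def co (𝒞 : CS E L) (X : Set E) (d e : E) : Prop :=
  ¬ lt 𝒞 X d e ∧ ¬ lt 𝒞 X e d

/-- The set of minimal events of a configuration. -/
def minE (𝒞 : CS E L) (X : Set E) : Set E :=
  {e | e ∈ X ∧ ∀ d ∈ X, ¬ lt 𝒞 X d e}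

/-- Depth of an event in a configuration: the length of the longest
causal chain (w.r.t. `<_X`) in `X` up to and including `e`. -/
noncomputable def depth (𝒞 : CS E L) (X : Set E) (e : E) : ℕ :=
  sSup {n | ∃ l : List E, l.length = n ∧ l.Chain' (lt 𝒞 X) ∧
    (∀ x ∈ l, x ∈ X) ∧ l.getLast? = some e}

/-- Multiset of labels of a (finite) set of events. -/
noncomputable def labelMS (𝒞 : CS E L) (S : Set E) : Multiset L := by
  classical exact if h : S.Finite then h.toFinset.val.map 𝒞.label else 0

/-- Single-event forward transition `X —a→ X'`. -/
def FTrans (𝒞 : CS E L) (a : L) (X X' : Set E) : Prop :=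
  X ∈ 𝒞.C ∧ X' ∈ 𝒞.C ∧ X ⊆ X' ∧ ∃ e, X' \ X = {e} ∧ 𝒞.label e = a

/-- Single-event reverse transition `X ⇝a X'`. -/
def RTrans (𝒞 : CS E L) (a : L) (X X' : Set E) : Prop :=
  FTrans 𝒞 a X' X

/-- Step transition `X —A→ X'`: the added events are pairwise concurrent
in `X'` and carry the label multiset `A`. -/
def Step (𝒞 : CS E L) (A : Multiset L) (X X' : Set E) : Prop :=
  X ∈ 𝒞.C ∧ X' ∈ 𝒞.C ∧ X ⊆ X' ∧ ∃ F : Finset E, ↑F = X' \ X ∧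
    (∀ d ∈ F, ∀ e ∈ F, co 𝒞 X' d e) ∧ F.val.map 𝒞.label = A

/-- Reverse step transition `X ⇝A X'`. -/
def RStep (𝒞 : CS E L) (A : Multiset L) (X X' : Set E) : Prop :=
  Step 𝒞 A X' X

/-- Equidepth step: all added events have the same depth in `X'`. -/
def EqStep (𝒞 : CS E L) (A : Multiset L) (X X' : Set E) : Prop :=
  Step 𝒞 A X X' ∧ ∀ d ∈ X' \ X, ∀ e ∈ X' \ X, depth 𝒞 X' d = depth 𝒞 X' e

/-- Reverse equidepth step `X ⇝A= X'`. -/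
def REqStep (𝒞 : CS E L) (A : Multiset L) (X X' : Set E) : Prop :=
  EqStep 𝒞 A X' X

/-- Single-event forward transition with depth: the new event has label `a`
and depth `k` in `X'`. -/
def FTransD (𝒞 : CS E L) (a : L) (k : ℕ) (X X' : Set E) : Prop :=
  X ∈ 𝒞.C ∧ X' ∈ 𝒞.C ∧ X ⊆ X' ∧
    ∃ e, X' \ X = {e} ∧ 𝒞.label e = a ∧ depth 𝒞 X' e = k

/-- Single-event reverse transition with depth. -/
def RTransD (𝒞 : CS E L) (a : L) (k : ℕ) (X X' : Set E) : Prop :=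
  FTransD 𝒞 a k X' X

/-- A multiset of labels is homogeneous if all its elements are equal. -/
def Hom (A : Multiset L) : Prop := ∀ a ∈ A, ∀ b ∈ A, a = b

/-- `R` is a relation between configurations of `𝒞` and `𝒟`, containing `(∅, ∅)`. -/
def Dom (𝒞 : CS E₁ L) (𝒟 : CS E₂ L) (R : Set E₁ → Set E₂ → Prop) : Prop :=
  R ∅ ∅ ∧ ∀ X Y, R X Y → X ∈ 𝒞.C ∧ Y ∈ 𝒟.C

/-- Interleaving bisimulation. -/
def IsIB (𝒞 : CS E₁ L) (𝒟 : CS E₂ L) (R : Set E₁ → Set E₂ → Prop) : Prop :=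
  Dom 𝒞 𝒟 R ∧ ∀ X Y, R X Y →
    (∀ a X', FTrans 𝒞 a X X' → ∃ Y', FTrans 𝒟 a Y Y' ∧ R X' Y') ∧
    (∀ a Y', FTrans 𝒟 a Y Y' → ∃ X', FTrans 𝒞 a X X' ∧ R X' Y')

/-- Reverse bisimulation: an IB also matching reverse single-event transitions. -/
def IsRB (𝒞 : CS E₁ L) (𝒟 : CS E₂ L) (R : Set E₁ → Set E₂ → Prop) : Prop :=
  IsIB 𝒞 𝒟 R ∧ ∀ X Y, R X Y →
    (∀ a X', RTrans 𝒞 a X X' → ∃ Y', RTrans 𝒟 a Y Y' ∧ R X' Y') ∧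
    (∀ a Y', RTrans 𝒟 a Y Y' → ∃ X', RTrans 𝒞 a X X' ∧ R X' Y')

/-- Step bisimulation. -/
def IsSB (𝒞 : CS E₁ L) (𝒟 : CS E₂ L) (R : Set E₁ → Set E₂ → Prop) : Prop :=
  Dom 𝒞 𝒟 R ∧ ∀ X Y, R X Y →
    (∀ A X', Step 𝒞 A X X' → ∃ Y', Step 𝒟 A Y Y' ∧ R X' Y') ∧
    (∀ A Y', Step 𝒟 A Y Y' → ∃ X', Step 𝒞 A X X' ∧ R X' Y')

/-- Reverse step bisimulation: an SB also matching reverse steps. -/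
def IsRSB (𝒞 : CS E₁ L) (𝒟 : CS E₂ L) (R : Set E₁ → Set E₂ → Prop) : Prop :=
  IsSB 𝒞 𝒟 R ∧ ∀ X Y, R X Y →
    (∀ A X', RStep 𝒞 A X X' → ∃ Y', RStep 𝒟 A Y Y' ∧ R X' Y') ∧
    (∀ A Y', RStep 𝒟 A Y Y' → ∃ X', RStep 𝒞 A X X' ∧ R X' Y')

/-- Reverse homogeneous step bisimulation: matches forward single-event
transitions and reverse homogeneous steps. -/
def IsRHSB (𝒞 : CS E₁ L) (𝒟 : CS E₂ L) (R : Set E₁ → Set E₂ → Prop) : Prop :=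
  Dom 𝒞 𝒟 R ∧ ∀ X Y, R X Y →
    (∀ a X', FTrans 𝒞 a X X' → ∃ Y', FTrans 𝒟 a Y Y' ∧ R X' Y') ∧
    (∀ a Y', FTrans 𝒟 a Y Y' → ∃ X', FTrans 𝒞 a X X' ∧ R X' Y') ∧
    (∀ A X', Hom A → RStep 𝒞 A X X' → ∃ Y', RStep 𝒟 A Y Y' ∧ R X' Y') ∧
    (∀ A Y', Hom A → RStep 𝒟 A Y Y' → ∃ X', RStep 𝒞 A X X' ∧ R X' Y')

/-- Reverse homogeneous equidepth step bisimulation. -/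
def IsRHESB (𝒞 : CS E₁ L) (𝒟 : CS E₂ L) (R : Set E₁ → Set E₂ → Prop) : Prop :=
  Dom 𝒞 𝒟 R ∧ ∀ X Y, R X Y →
    (∀ a X', FTrans 𝒞 a X X' → ∃ Y', FTrans 𝒟 a Y Y' ∧ R X' Y') ∧
    (∀ a Y', FTrans 𝒟 a Y Y' → ∃ X', FTrans 𝒞 a X X' ∧ R X' Y') ∧
    (∀ A X', Hom A → REqStep 𝒞 A X X' → ∃ Y', REqStep 𝒟 A Y Y' ∧ R X' Y') ∧
    (∀ A Y', Hom A → REqStep 𝒟 A Y Y' → ∃ X', REqStep 𝒞 A X X' ∧ R X' Y')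

/-- Depth-respecting bisimulation. -/
def IsDB (𝒞 : CS E₁ L) (𝒟 : CS E₂ L) (R : Set E₁ → Set E₂ → Prop) : Prop :=
  Dom 𝒞 𝒟 R ∧ ∀ X Y, R X Y →
    (∀ a k X', FTransD 𝒞 a k X X' → ∃ Y', FTransD 𝒟 a k Y Y' ∧ R X' Y') ∧
    (∀ a k Y', FTransD 𝒟 a k Y Y' → ∃ X', FTransD 𝒞 a k X X' ∧ R X' Y')

/-- Reverse depth-respecting bisimulation. -/
def IsRDB (𝒞 : CS E₁ L) (𝒟 : CS E₂ L) (R : Set E₁ → Set E₂ → Prop) : Prop :=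
  IsDB 𝒞 𝒟 R ∧ ∀ X Y, R X Y →
    (∀ a k X', RTransD 𝒞 a k X X' → ∃ Y', RTransD 𝒟 a k Y Y' ∧ R X' Y') ∧
    (∀ a k Y', RTransD 𝒟 a k Y Y' → ∃ X', RTransD 𝒞 a k X X' ∧ R X' Y')

/-- The lifting of a configuration structure w.r.t. a configuration `M`. -/
def lift (𝒞 : CS E L) (M : Set E) : CS E L where
  C := {Z | ∃ X, X ∈ 𝒞.C ∧ M ⊆ X ∧ minE 𝒞 X = minE 𝒞 M ∧ Z = X \ M}
  finite := by
    rintro Z ⟨X, hX, -, -, rfl⟩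
    exact (𝒞.finite X hX).subset Set.diff_subset
  label := 𝒞.label

/-- Events of `X` of depth at most `n`. -/
def levelLe (𝒞 : CS E L) (X : Set E) (n : ℕ) : Set E :=
  {e | e ∈ X ∧ depth 𝒞 X e ≤ n}

/-- Events of `X` of depth exactly `n`. -/
def levelEq (𝒞 : CS E L) (X : Set E) (n : ℕ) : Set E :=
  {e | e ∈ X ∧ depth 𝒞 X e = n}

/-- No equidepth auto-concurrency: distinct concurrent events never share
both label and depth. -/
def NoEqAC (𝒞 : CS E L) : Prop :=
  ∀ X ∈ 𝒞.C, ∀ d ∈ X, ∀ e ∈ X, co 𝒞 X d e → 𝒞.label d = 𝒞.label e →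
    depth 𝒞 X d = depth 𝒞 X e → d = e

/-- `f` (a set of pairs) is a label- and order-preserving isomorphism
between configurations `X` and `Y`. -/
def IsIso (𝒞 : CS E₁ L) (𝒟 : CS E₂ L) (X : Set E₁) (Y : Set E₂)
    (f : Set (E₁ × E₂)) : Prop :=
  (∀ p ∈ f, p.1 ∈ X ∧ p.2 ∈ Y) ∧
  (∀ d ∈ X, ∃! e, (d, e) ∈ f) ∧
  (∀ e ∈ Y, ∃! d, (d, e) ∈ f) ∧
  (∀ p ∈ f, 𝒞.label p.1 = 𝒟.label p.2) ∧
  (∀ p ∈ f, ∀ q ∈ f, (lt 𝒞 X p.1 q.1 ↔ lt 𝒟 Y p.2 q.2))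

/-- Hereditary history-preserving bisimulation. -/
def IsHH (𝒞 : CS E₁ L) (𝒟 : CS E₂ L)
    (R : Set (Set E₁ × Set E₂ × Set (E₁ × E₂))) : Prop :=
  (∅, ∅, ∅) ∈ R ∧
  ∀ X Y f, (X, Y, f) ∈ R →
    X ∈ 𝒞.C ∧ Y ∈ 𝒟.C ∧ IsIso 𝒞 𝒟 X Y f ∧
    (∀ a X', FTrans 𝒞 a X X' → ∃ Y' f', FTrans 𝒟 a Y Y' ∧
      (X', Y', f') ∈ R ∧ {p ∈ f' | p.1 ∈ X} = f) ∧
    (∀ a Y', FTrans 𝒟 a Y Y' → ∃ X' f', FTrans 𝒞 a X X' ∧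
      (X', Y', f') ∈ R ∧ {p ∈ f' | p.1 ∈ X} = f) ∧
    (∀ a X', RTrans 𝒞 a X X' → ∃ Y' f', RTrans 𝒟 a Y Y' ∧
      (X', Y', f') ∈ R ∧ {p ∈ f | p.1 ∈ X'} = f')

end CS

open CS

section Stmt13Aux

open Set

namespace CS

variable {E : Type u} {L : Type v} {𝒞 : CS E L} {X Z : Set E} {d e f : E} {n : ℕ}

lemma mem_levelLe {x : E} : x ∈ levelLe 𝒞 X n ↔ x ∈ X ∧ depth 𝒞 X x ≤ n := Iff.rfl

lemma mem_levelEq {x : E} : x ∈ levelEq 𝒞 X n ↔ x ∈ X ∧ depth 𝒞 X x = n := Iff.rfl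

lemma le_refl' : le 𝒞 X d d := fun _ _ _ h => h

lemma le_trans' (h1 : le 𝒞 X d e) (h2 : le 𝒞 X e f) : le 𝒞 X d f :=
  fun Y hY hYX hf => h1 Y hY hYX (h2 Y hY hYX hf)

lemma le_mem_left (hX : X ∈ 𝒞.C) (he : e ∈ X) (h : le 𝒞 X d e) : d ∈ X :=
  h X hX subset_rfl he

lemma le_antisymm' (h𝒞 : IsStable 𝒞) :
    ∀ X, X ∈ 𝒞.C → ∀ d ∈ X, ∀ e ∈ X, le 𝒞 X d e → le 𝒞 X e d → d = e := by
  suffices H : ∀ n X, X.ncard ≤ n → X ∈ 𝒞.C → ∀ d ∈ X, ∀ e ∈ X,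
      le 𝒞 X d e → le 𝒞 X e d → d = e by
    intro X hX d hd e he h1 h2; exact H X.ncard X le_rfl hX d hd e he h1 h2
  intro n
  induction n with
  | zero =>
    intro X hc hX d hd _ _ _ _
    have hfin := 𝒞.finite X hX
    have : X = ∅ := (Set.ncard_eq_zero hfin).mp (Nat.le_zero.mp hc)
    simp [this] at hd
  | succ n ih =>
    intro X hc hX d hd e he h1 h2
    by_contra hne
    have hfin := 𝒞.finite X hX
    have hXne : X ≠ ∅ := by intro h; simp [h] at hd
    obtain ⟨r, hr, hrC⟩ := h𝒞.2.1 X hX hXne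
    by_cases hre : r = e
    · subst hre
      have hd' : d ∈ X \ {r} := ⟨hd, by simpa using hne⟩
      have := h2 (X \ {r}) hrC diff_subset hd'
      simp at this
    · by_cases hrd : r = d
      · subst hrd
        have he' : e ∈ X \ {r} := ⟨he, by simpa using fun h => hre h.symm⟩
        have := h1 (X \ {r}) hrC diff_subset he'
        simp at this
      · have hd' : d ∈ X \ {r} := ⟨hd, by simpa using fun h => hrd h.symm⟩
        have he' : e ∈ X \ {r} := ⟨he, by simpa using fun h => hre h.symm⟩
        have hcard : (X \ {r}).ncard ≤ n := by
          have := Set.ncard_diff_singleton_lt_of_mem hr hfin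
          omega
        exact hne (ih (X \ {r}) hcard hrC d hd' e he'
          (fun Y hY hs => h1 Y hY (hs.trans diff_subset))
          (fun Y hY hs => h2 Y hY (hs.trans diff_subset)))

lemma lt_irrefl' : ¬ lt 𝒞 X e e := fun h => h.2 rfl

lemma lt_trans' (h𝒞 : IsStable 𝒞) (hX : X ∈ 𝒞.C) (hd : d ∈ X) (he : e ∈ X)
    (h1 : lt 𝒞 X d e) (h2 : lt 𝒞 X e f) : lt 𝒞 X d f := by
  refine ⟨le_trans' h1.1 h2.1, ?_⟩
  rintro rfl
  exact h1.2 (le_antisymm' h𝒞 X hX d hd e he h1.1 h2.1)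

lemma chain'_pairwise' {α : Type u} {r : α → α → Prop} {P : α → Prop}
    (htr : ∀ a b c, P a → P b → P c → r a b → r b c → r a c) :
    ∀ l : List α, l.Chain' r → (∀ x ∈ l, P x) → l.Pairwise r := by
  intro l
  induction l with
  | nil => simp
  | cons a t ih =>
    cases t with
    | nil => simp
    | cons b t' =>
      intro hc hm
      simp only [List.Chain'] at hc; rw [List.isChain_cons_cons] at hc
      have hpt := ih hc.2 (fun x hx => hm x (List.mem_cons_of_mem _ hx))
      refine List.Pairwise.cons ?_ hpt
      intro x hx
      rcases List.mem_cons.mp hx with rfl | hx'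
      · exact hc.1
      · have hbx : r b x := (List.pairwise_cons.mp hpt).1 x hx'
        exact htr a b x (hm a (by simp)) (hm b (by simp))
          (hm x (List.mem_cons_of_mem _ (List.mem_cons_of_mem _ hx'))) hc.1 hbx

/-- The set of chain lengths used to define `depth`. -/
def dset (𝒞 : CS E L) (X : Set E) (e : E) : Set ℕ :=
  {n | ∃ l : List E, l.length = n ∧ l.Chain' (lt 𝒞 X) ∧
    (∀ x ∈ l, x ∈ X) ∧ l.getLast? = some e}

lemma depth_def : depth 𝒞 X e = sSup (dset 𝒞 X e) := rfl

lemma mem_dset {k : ℕ} : k ∈ dset 𝒞 X e ↔ ∃ l : List E, l.length = k ∧ l.Chain' (lt 𝒞 X) ∧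
    (∀ x ∈ l, x ∈ X) ∧ l.getLast? = some e := Iff.rfl

lemma dset_bddAbove (h𝒞 : IsStable 𝒞) (hX : X ∈ 𝒞.C) : ∀ k ∈ dset 𝒞 X e, k ≤ X.ncard := by
  classical
  rintro k ⟨l, rfl, hc, hm, -⟩
  have hpw : l.Pairwise (lt 𝒞 X) :=
    chain'_pairwise' (P := (· ∈ X)) (fun a b c ha hb hc' h1 h2 => lt_trans' h𝒞 hX ha hb h1 h2)
      l hc hm
  have hnd : l.Nodup := hpw.imp (fun h => h.2)
  have hfin := 𝒞.finite X hX
  have h1 : l.toFinset.card = l.length := List.toFinset_card_of_nodup hnd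
  have h2 : l.toFinset ⊆ hfin.toFinset := by
    intro x hx; rw [Set.Finite.mem_toFinset]; exact hm x (List.mem_toFinset.mp hx)
  calc l.length = l.toFinset.card := h1.symm
    _ ≤ hfin.toFinset.card := Finset.card_le_card h2
    _ = X.ncard := (Set.ncard_eq_toFinset_card X hfin).symm

lemma dset_bdd (h𝒞 : IsStable 𝒞) (hX : X ∈ 𝒞.C) : BddAbove (dset 𝒞 X e) :=
  ⟨X.ncard, fun _ hn => dset_bddAbove h𝒞 hX _ hn⟩

lemma one_mem_dset (he : e ∈ X) : 1 ∈ dset 𝒞 X e :=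
  ⟨[e], rfl, List.isChain_singleton e, by simpa using he, rfl⟩

lemma one_le_depth (h𝒞 : IsStable 𝒞) (hX : X ∈ 𝒞.C) (he : e ∈ X) : 1 ≤ depth 𝒞 X e :=
  le_csSup (dset_bdd h𝒞 hX) (one_mem_dset he)

lemma depth_mem_dset (h𝒞 : IsStable 𝒞) (hX : X ∈ 𝒞.C) (he : e ∈ X) :
    depth 𝒞 X e ∈ dset 𝒞 X e :=
  Nat.sSup_mem ⟨1, one_mem_dset he⟩ (dset_bdd h𝒞 hX)

lemma depth_lt_of_lt (h𝒞 : IsStable 𝒞) (hX : X ∈ 𝒞.C) (hd : d ∈ X) (he : e ∈ X)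
    (hlt : lt 𝒞 X d e) : depth 𝒞 X d < depth 𝒞 X e := by
  obtain ⟨l, hlen, hc, hm, hlast⟩ := depth_mem_dset h𝒞 hX hd
  have hmem : depth 𝒞 X d + 1 ∈ dset 𝒞 X e := by
    refine ⟨l ++ [e], by simp [hlen], ?_, ?_, List.getLast?_concat⟩
    · simp only [List.Chain']; rw [List.isChain_append]
      refine ⟨hc, List.isChain_singleton e, ?_⟩
      intro x hx y hy
      rw [hlast] at hx
      have hx' : d = x := by simpa using hx
      have hy' : e = y := by simpa using hy
      subst hx'; subst hy'; exact hlt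
    · intro x hx
      rcases List.mem_append.mp hx with h | h
      · exact hm x h
      · have : x = e := by simpa using h
        subst this; exact he
  have h := le_csSup (dset_bdd h𝒞 hX (e := e)) hmem
  rw [← depth_def] at h
  omega

lemma depth_le_of_le (h𝒞 : IsStable 𝒞) (hX : X ∈ 𝒞.C) (hd : d ∈ X) (he : e ∈ X)
    (hle : le 𝒞 X d e) : depth 𝒞 X d ≤ depth 𝒞 X e := by
  by_cases hde : d = e
  · subst hde; exact le_rfl
  · exact (depth_lt_of_lt h𝒞 hX hd he ⟨hle, hde⟩).le

lemma maximal_of_depth_max (h𝒞 : IsStable 𝒞) (hX : X ∈ 𝒞.C) (he : e ∈ X)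
    (hmax : ∀ z ∈ X, depth 𝒞 X z ≤ depth 𝒞 X e) : ∀ z ∈ X, ¬ lt 𝒞 X e z :=
  fun z hz hlt => absurd (depth_lt_of_lt h𝒞 hX he hz hlt) (not_lt.mpr (hmax z hz))

lemma chain_le_last : ∀ l : List E, l.Chain' (lt 𝒞 X) → l.getLast? = some e →
    ∀ x ∈ l, le 𝒞 X x e := by
  intro l
  induction l with
  | nil => simp
  | cons a t ih =>
    cases t with
    | nil =>
      intro _ hlast x hx
      have ha : a = e := by simpa using hlast
      have hx' : x = a := by simpa using hx
      subst ha; subst hx'; exact le_refl'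
    | cons b t' =>
      intro hc hlast x hx
      simp only [List.Chain'] at hc; rw [List.isChain_cons_cons] at hc
      have hlast' : (b :: t').getLast? = some e := by
        simpa using hlast
      rcases List.mem_cons.mp hx with rfl | hx'
      · exact le_trans' hc.1.1 (ih hc.2 hlast' b (by simp))
      · exact ih hc.2 hlast' x hx'

lemma chain'_imp_mem {α : Type u} {r s : α → α → Prop} :
    ∀ l : List α, (∀ a b, a ∈ l → b ∈ l → r a b → s a b) → l.Chain' r → l.Chain' s := by
  intro l
  induction l with
  | nil => intro _ _; exact List.isChain_nil
  | cons a t ih =>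
    cases t with
    | nil => intro _ _; exact List.isChain_singleton _
    | cons b t' =>
      intro h hc
      simp only [List.Chain'] at hc ⊢; rw [List.isChain_cons_cons] at hc ⊢
      exact ⟨h a b (by simp) (by simp) hc.1,
        ih (fun x y hx hy => h x y (List.mem_cons_of_mem _ hx) (List.mem_cons_of_mem _ hy))
          hc.2⟩

lemma le_shrink (hZX : Z ⊆ X) (h : le 𝒞 X d e) : le 𝒞 Z d e :=
  fun Y hY hYZ => h Y hY (hYZ.trans hZX)

lemma le_grow (h𝒞 : IsStable 𝒞) (hX : X ∈ 𝒞.C) (hZ : Z ∈ 𝒞.C) (hZX : Z ⊆ X)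
    (he : e ∈ Z) (h : le 𝒞 Z d e) : le 𝒞 X d e := by
  intro Y hY hYX heY
  have hI : Y ∩ Z ∈ 𝒞.C := h𝒞.2.2.2 Y hY Z hZ X hX (Set.union_subset hYX hZX)
  exact (h (Y ∩ Z) hI inter_subset_right ⟨heY, he⟩).1

lemma dset_eq_of_subcfg (h𝒞 : IsStable 𝒞) (hX : X ∈ 𝒞.C) (hZ : Z ∈ 𝒞.C) (hZX : Z ⊆ X)
    (he : e ∈ Z) : dset 𝒞 Z e = dset 𝒞 X e := by
  ext n
  constructor
  · rintro ⟨l, hlen, hc, hm, hlast⟩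
    exact ⟨l, hlen,
      chain'_imp_mem l (fun a b _ hb hr => ⟨le_grow h𝒞 hX hZ hZX (hm b hb) hr.1, hr.2⟩) hc,
      fun x hx => hZX (hm x hx), hlast⟩
  · rintro ⟨l, hlen, hc, hm, hlast⟩
    have hmZ : ∀ x ∈ l, x ∈ Z := fun x hx => chain_le_last l hc hlast x hx Z hZ hZX he
    exact ⟨l, hlen, chain'_imp_mem l (fun a b _ _ hr => ⟨le_shrink hZX hr.1, hr.2⟩) hc,
      hmZ, hlast⟩

lemma depth_eq_of_subcfg (h𝒞 : IsStable 𝒞) (hX : X ∈ 𝒞.C) (hZ : Z ∈ 𝒞.C) (hZX : Z ⊆ X)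
    (he : e ∈ Z) : depth 𝒞 Z e = depth 𝒞 X e := by
  rw [depth_def, depth_def, dset_eq_of_subcfg h𝒞 hX hZ hZX he]

lemma sInter_finset_mem (h𝒞 : IsStable 𝒞) (hX : X ∈ 𝒞.C) :
    ∀ s : Finset (Set E), s.Nonempty → (∀ Y ∈ s, Y ∈ 𝒞.C ∧ Y ⊆ X) →
      ⋂₀ ↑s ∈ 𝒞.C ∧ ⋂₀ ↑s ⊆ X := by
  classical
  intro s
  induction s using Finset.induction with
  | empty => intro h; exact absurd h (by simp)
  | insert a s ha ih =>
    intro _ hmem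
    rcases s.eq_empty_or_nonempty with rfl | hs
    · have := hmem a (by simp)
      simpa using this
    · have hih := ih hs (fun Y hY => hmem Y (Finset.mem_insert_of_mem hY))
      have ha' := hmem a (Finset.mem_insert_self a s)
      rw [Finset.coe_insert, Set.sInter_insert]
      exact ⟨h𝒞.2.2.2 a ha'.1 _ hih.1 X hX (Set.union_subset ha'.2 hih.2),
        inter_subset_left.trans ha'.2⟩

lemma princ_mem (h𝒞 : IsStable 𝒞) (hX : X ∈ 𝒞.C) (he : e ∈ X) :
    {d | le 𝒞 X d e} ∈ 𝒞.C := by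
  classical
  have hfin := 𝒞.finite X hX
  have hFfin : {Y | Y ∈ 𝒞.C ∧ Y ⊆ X ∧ e ∈ Y}.Finite :=
    hfin.finite_subsets.subset (fun Y hY => hY.2.1)
  have hne : hFfin.toFinset.Nonempty :=
    ⟨X, by rw [Set.Finite.mem_toFinset]; exact ⟨hX, subset_rfl, he⟩⟩
  have h := sInter_finset_mem h𝒞 hX hFfin.toFinset hne (fun Y hY => by
    rw [Set.Finite.mem_toFinset] at hY; exact ⟨hY.1, hY.2.1⟩)
  have heq : ⋂₀ ↑hFfin.toFinset = {d | le 𝒞 X d e} := by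
    rw [Set.Finite.coe_toFinset]
    ext d
    simp only [Set.mem_sInter, Set.mem_setOf_eq]
    constructor
    · intro h' Y hY hYX heY; exact h' Y ⟨hY, hYX, heY⟩
    · rintro h' Y ⟨hY, hYX, heY⟩; exact h' Y hY hYX heY
  rw [heq] at h
  exact h.1

lemma leftClosed_mem (h𝒞 : IsStable 𝒞) (hX : X ∈ 𝒞.C) (hZX : Z ⊆ X)
    (hcl : ∀ d z, z ∈ Z → le 𝒞 X d z → d ∈ Z) : Z ∈ 𝒞.C := by
  classical
  have hZfin := (𝒞.finite X hX).subset hZX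
  have key : ∀ s : Finset E, ↑s ⊆ Z →
      (⋃ x ∈ s, {d | le 𝒞 X d x}) ∈ 𝒞.C ∧ (⋃ x ∈ s, {d | le 𝒞 X d x}) ⊆ X := by
    intro s
    induction s using Finset.induction with
    | empty => intro _; simp only [Finset.notMem_empty, Set.iUnion_of_empty,
        Set.iUnion_empty]; exact ⟨h𝒞.1, empty_subset _⟩
    | insert a s ha ih =>
      intro hsub
      have haZ : a ∈ Z := hsub (by simp)
      have ih' := ih (fun x hx => hsub (by simp [hx]))
      rw [Finset.set_biUnion_insert]
      have hprinc := princ_mem h𝒞 hX (hZX haZ)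
      have hsubX : {d | le 𝒞 X d a} ⊆ X := fun d hd => le_mem_left hX (hZX haZ) hd
      exact ⟨h𝒞.2.2.1 _ hprinc _ ih'.1 X hX (Set.union_subset hsubX ih'.2),
        Set.union_subset hsubX ih'.2⟩
  have hZeq : Z = ⋃ x ∈ hZfin.toFinset, {d | le 𝒞 X d x} := by
    ext z
    constructor
    · intro hz
      have hzf : z ∈ hZfin.toFinset := by rw [Set.Finite.mem_toFinset]; exact hz
      exact Set.mem_biUnion hzf le_refl'
    · intro hz
      obtain ⟨x, hx, hzx⟩ := Set.mem_iUnion₂.mp hz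
      rw [Set.Finite.mem_toFinset] at hx
      exact hcl z x hx hzx
  rw [hZeq]
  exact (key hZfin.toFinset (by rw [Set.Finite.coe_toFinset])).1

lemma maximal_diff_mem (h𝒞 : IsStable 𝒞) (hX : X ∈ 𝒞.C) {S : Set E}
    (hS : ∀ x ∈ S, ∀ z ∈ X, ¬ lt 𝒞 X x z) : X \ S ∈ 𝒞.C := by
  apply leftClosed_mem h𝒞 hX diff_subset
  intro d z hz hle
  have hdX : d ∈ X := le_mem_left hX hz.1 hle
  refine ⟨hdX, fun hdS => ?_⟩
  by_cases hdz : d = z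
  · exact hz.2 (hdz ▸ hdS)
  · exact hS d hdS z hz.1 ⟨hle, hdz⟩

lemma levelLe_subset' : levelLe 𝒞 X n ⊆ X := fun _ hx => hx.1

lemma levelLe_mem (h𝒞 : IsStable 𝒞) (hX : X ∈ 𝒞.C) (n : ℕ) : levelLe 𝒞 X n ∈ 𝒞.C := by
  apply leftClosed_mem h𝒞 hX levelLe_subset'
  intro d z hz hle
  have hdX : d ∈ X := le_mem_left hX hz.1 hle
  exact ⟨hdX, le_trans (depth_le_of_le h𝒞 hX hdX hz.1 hle) hz.2⟩

lemma levelLe_subcfg (h𝒞 : IsStable 𝒞) (hX : X ∈ 𝒞.C) (hZ : Z ∈ 𝒞.C) (hZX : Z ⊆ X) (k : ℕ) :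
    levelLe 𝒞 Z k = levelLe 𝒞 X k ∩ Z := by
  ext x
  constructor
  · rintro ⟨hxZ, hd⟩
    exact ⟨⟨hZX hxZ, by rw [← depth_eq_of_subcfg h𝒞 hX hZ hZX hxZ]; exact hd⟩, hxZ⟩
  · rintro ⟨⟨hxX, hd⟩, hxZ⟩
    exact ⟨hxZ, by rw [depth_eq_of_subcfg h𝒞 hX hZ hZX hxZ]; exact hd⟩

/-- Indicator `1_{a ≤ k}`. -/
def chi (a k : ℕ) : ℕ := if a ≤ k then 1 else 0

lemma chi_of_le {a k : ℕ} (h : a ≤ k) : chi a k = 1 := if_pos h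

lemma chi_of_gt {a k : ℕ} (h : k < a) : chi a k = 0 := if_neg (by omega)

lemma chi_jump (a j : ℕ) (ha : 1 ≤ a) (hj : 1 ≤ j) :
    chi a j = chi a (j - 1) + (if a = j then 1 else 0) := by
  unfold chi; split_ifs <;> omega

lemma chi_inj {a b : ℕ} (h : ∀ k, chi a k = chi b k) : a = b := by
  have h1 := h a; have h2 := h b
  unfold chi at h1 h2
  split_ifs at h1 h2 <;> omega

lemma chi_key {A B : ℕ → ℕ} {m N m' d : ℕ}
    (h1 : ∀ k, A k + chi m k = B k + chi N k)
    (h2 : ∀ k, A k + chi m' k = B k + chi d k)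
    (hm : 1 ≤ m) (hN : 1 ≤ N) (hm' : 1 ≤ m') (hd : 1 ≤ d) (hne : m ≠ N) :
    d = N ∧ m' = m := by
  have key : ∀ j, 1 ≤ j → ((if m = j then 1 else 0) + (if d = j then 1 else 0) : ℕ)
      = (if N = j then 1 else 0) + (if m' = j then 1 else 0) := by
    intro j hj
    have c1 := h1 j; have c2 := h2 j; have c3 := h1 (j - 1); have c4 := h2 (j - 1)
    have jm := chi_jump m j hm hj
    have jN := chi_jump N j hN hj
    have jm' := chi_jump m' j hm' hj
    have jd := chi_jump d j hd hj
    split_ifs at jm jN jm' jd ⊢ <;> omega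
  have k1 := key m hm
  rw [if_pos rfl, if_neg (show ¬ N = m from fun h => hne h.symm)] at k1
  have hm'm : m' = m := by
    by_cases h : m' = m
    · exact h
    · rw [if_neg h] at k1; split_ifs at k1 <;> omega
  have hdm : d ≠ m := by
    intro h; rw [if_pos h, if_pos hm'm] at k1; omega
  have k2 := key d hd
  rw [if_pos rfl, if_neg (show ¬ m = d from fun h => hdm h.symm),
    if_neg (show ¬ m' = d from fun h => hdm (hm'm ▸ h).symm)] at k2
  have hNd : N = d := by
    by_cases h : N = d
    · exact h
    · rw [if_neg h] at k2; omega
  exact ⟨hNd.symm, hm'm⟩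

lemma removal_census (h𝒞 : IsStable 𝒞) (hX : X ∈ 𝒞.C) {u : E} (hu : u ∈ X)
    (hX' : X \ {u} ∈ 𝒞.C) (k : ℕ) :
    (levelLe 𝒞 X k).ncard = (levelLe 𝒞 (X \ {u}) k).ncard + chi (depth 𝒞 X u) k := by
  have hfin := 𝒞.finite X hX
  have hflev : (levelLe 𝒞 X k).Finite := hfin.subset levelLe_subset'
  have heq : levelLe 𝒞 (X \ {u}) k = levelLe 𝒞 X k \ {u} := by
    rw [levelLe_subcfg h𝒞 hX hX' diff_subset]
    ext x
    simp only [Set.mem_inter_iff, Set.mem_diff, Set.mem_singleton_iff, mem_levelLe]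
    tauto
  rw [heq]
  unfold chi
  split_ifs with h
  · have humem : u ∈ levelLe 𝒞 X k := ⟨hu, h⟩
    have h1 := Set.ncard_diff_singleton_of_mem humem
    have h2 : 1 ≤ (levelLe 𝒞 X k).ncard := (Set.ncard_pos hflev).mpr ⟨u, humem⟩
    omega
  · have hnm : u ∉ levelLe 𝒞 X k := fun hc => h hc.2
    rw [Set.diff_singleton_eq_self hnm]
    omega

lemma census_partition (h𝒞 : IsStable 𝒞) (hX : X ∈ 𝒞.C) (k : ℕ) (hk : 1 ≤ k) :
    (levelLe 𝒞 X k).ncard = (levelLe 𝒞 X (k - 1)).ncard + (levelEq 𝒞 X k).ncard := by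
  have hfin := 𝒞.finite X hX
  have hsplit : levelLe 𝒞 X k = levelLe 𝒞 X (k - 1) ∪ levelEq 𝒞 X k := by
    ext x
    simp only [Set.mem_union, mem_levelLe, mem_levelEq]
    constructor
    · rintro ⟨hx, hd⟩
      by_cases h : depth 𝒞 X x = k
      · exact Or.inr ⟨hx, h⟩
      · exact Or.inl ⟨hx, by omega⟩
    · rintro (⟨hx, hd⟩ | ⟨hx, hd⟩)
      · exact ⟨hx, by omega⟩
      · exact ⟨hx, by omega⟩
  rw [hsplit, Set.ncard_union_eq ?_ (hfin.subset (fun x hx => hx.1))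
    (hfin.subset (fun x hx => hx.1))]
  rw [Set.disjoint_left]
  rintro x ⟨_, h1⟩ ⟨_, h2⟩
  omega

lemma exists_pred (h𝒞 : IsStable 𝒞) (hX : X ∈ 𝒞.C) (he : e ∈ X)
    (h2 : 2 ≤ depth 𝒞 X e) :
    ∃ d ∈ X, lt 𝒞 X d e ∧ depth 𝒞 X d = depth 𝒞 X e - 1 := by
  obtain ⟨l, hlen, hc, hm, hlast⟩ := depth_mem_dset h𝒞 hX he
  have hlne : l ≠ [] := by
    intro h; rw [h] at hlen; simp at hlen; omega
  have hgl : l.getLast hlne = e := by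
    have h := List.getLast?_eq_getLast hlne
    rw [hlast] at h
    exact (Option.some_inj.mp h).symm
  have hl : l.dropLast ++ [e] = l := by rw [← hgl]; exact List.dropLast_append_getLast hlne
  set t := l.dropLast with ht
  have htne : t ≠ [] := by
    intro h
    rw [h] at hl
    have : l.length = 1 := by rw [← hl]; simp
    omega
  set d := t.getLast htne with hd
  have hdlast : t.getLast? = some d := List.getLast?_eq_getLast htne
  have hchain : t.Chain' (lt 𝒞 X) ∧ lt 𝒞 X d e := by
    simp only [List.Chain'] at hc; rw [← hl, List.isChain_append] at hc
    refine ⟨hc.1, hc.2.2 d ?_ e rfl⟩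
    rw [hdlast]; rfl
  have hdX : d ∈ X := hm d (by rw [← hl]; exact List.mem_append_left _ (List.getLast_mem htne))
  have hdepth_ge : depth 𝒞 X e - 1 ≤ depth 𝒞 X d := by
    have hmem : t.length ∈ dset 𝒞 X d :=
      ⟨t, rfl, hchain.1, fun x hx => hm x (by rw [← hl]; exact List.mem_append_left _ hx), hdlast⟩
    have hle := le_csSup (dset_bdd h𝒞 hX) hmem
    rw [← depth_def] at hle
    have hlt : t.length + 1 = l.length := by rw [← hl]; simp
    omega
  have hdepth_lt : depth 𝒞 X d < depth 𝒞 X e := depth_lt_of_lt h𝒞 hX hdX he hchain.2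
  exact ⟨d, hdX, hchain.2, by omega⟩

lemma exists_depth_between (h𝒞 : IsStable 𝒞) (hX : X ∈ 𝒞.C) :
    ∀ D, ∀ e ∈ X, depth 𝒞 X e = D → ∀ j, 1 ≤ j → j ≤ D → ∃ v ∈ X, depth 𝒞 X v = j := by
  intro D
  induction D with
  | zero => intro e he _ j h1 h2; omega
  | succ D ih =>
    intro e he hD j h1 h2
    rcases eq_or_lt_of_le h2 with h | h
    · exact ⟨e, he, by omega⟩
    · obtain ⟨d, hdX, _, hdd⟩ := exists_pred h𝒞 hX he (by omega)
      exact ih d hdX (by omega) j h1 (by omega)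

lemma hom_singleton (a : L) : Hom ({a} : Multiset L) := by
  intro x hx y hy
  simp only [Multiset.mem_singleton] at hx hy
  rw [hx, hy]

lemma hom_pair (a : L) : Hom ({a, a} : Multiset L) := by
  intro x hx y hy
  simp only [Multiset.insert_eq_cons, Multiset.mem_cons, Multiset.mem_singleton] at hx hy
  rcases hx with hx | hx <;> rcases hy with hy | hy <;> rw [hx, hy]

lemma singleton_rstep (h𝒞 : IsStable 𝒞) (hX : X ∈ 𝒞.C) (he : e ∈ X)
    (hmax : ∀ z ∈ X, ¬ lt 𝒞 X e z) :
    REqStep 𝒞 {𝒞.label e} X (X \ {e}) := by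
  classical
  have hdiff : X \ (X \ {e}) = {e} :=
    Set.diff_diff_cancel_left (Set.singleton_subset_iff.mpr he)
  refine ⟨⟨maximal_diff_mem h𝒞 hX (S := {e})
      (fun x hx => by rw [Set.mem_singleton_iff] at hx; subst hx; exact hmax),
    hX, diff_subset, {e}, by rw [hdiff]; simp, ?_, by simp⟩, ?_⟩
  · intro d hd e' he'
    simp only [Finset.mem_singleton] at hd he'
    subst hd; subst he'
    exact ⟨lt_irrefl', lt_irrefl'⟩
  · intro d hd e' he'
    rw [hdiff] at hd he'
    simp only [Set.mem_singleton_iff] at hd he'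
    rw [hd, he']

lemma pair_rstep (h𝒞 : IsStable 𝒞) (hX : X ∈ 𝒞.C) {x₁ x₂ : E}
    (hx₁ : x₁ ∈ X) (hx₂ : x₂ ∈ X) (hne : x₁ ≠ x₂)
    (hm₁ : ∀ z ∈ X, ¬ lt 𝒞 X x₁ z) (hm₂ : ∀ z ∈ X, ¬ lt 𝒞 X x₂ z)
    (hdep : depth 𝒞 X x₁ = depth 𝒞 X x₂) (hlab : 𝒞.label x₁ = 𝒞.label x₂) :
    REqStep 𝒞 {𝒞.label x₁, 𝒞.label x₁} X (X \ {x₁, x₂}) := by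
  classical
  have hsub : ({x₁, x₂} : Set E) ⊆ X := by
    intro z hz; rcases hz with rfl | hz
    · exact hx₁
    · rw [Set.mem_singleton_iff] at hz; subst hz; exact hx₂
  have hdiff : X \ (X \ {x₁, x₂}) = {x₁, x₂} := Set.diff_diff_cancel_left hsub
  have hmaxS : ∀ x ∈ ({x₁, x₂} : Set E), ∀ z ∈ X, ¬ lt 𝒞 X x z := by
    intro x hx
    rcases hx with rfl | hx
    · exact hm₁
    · rw [Set.mem_singleton_iff] at hx; subst hx; exact hm₂
  refine ⟨⟨maximal_diff_mem h𝒞 hX hmaxS, hX, diff_subset, {x₁, x₂}, ?_, ?_, ?_⟩, ?_⟩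
  · rw [hdiff]; simp
  · intro d hd e' he'
    simp only [Finset.mem_insert, Finset.mem_singleton] at hd he'
    have hdX : d ∈ X := by rcases hd with rfl | rfl; exacts [hx₁, hx₂]
    have heX : e' ∈ X := by rcases he' with rfl | rfl; exacts [hx₁, hx₂]
    have hdm : ∀ z ∈ X, ¬ lt 𝒞 X d z := by rcases hd with rfl | rfl; exacts [hm₁, hm₂]
    have hem : ∀ z ∈ X, ¬ lt 𝒞 X e' z := by rcases he' with rfl | rfl; exacts [hm₁, hm₂]
    exact ⟨hdm e' heX, hem d hdX⟩
  · rw [Finset.insert_val, Multiset.ndinsert_of_notMem (by simpa using hne)]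
    simp [hlab]
  · intro d hd e' he'
    rw [hdiff] at hd he'
    have hdd : depth 𝒞 X d = depth 𝒞 X x₁ := by
      rcases hd with rfl | hd
      · rfl
      · rw [Set.mem_singleton_iff] at hd; subst hd; exact hdep.symm
    have hee : depth 𝒞 X e' = depth 𝒞 X x₁ := by
      rcases he' with rfl | he'
      · rfl
      · rw [Set.mem_singleton_iff] at he'; subst he'; exact hdep.symm
    rw [hdd, hee]

lemma unpack_rstep {𝒟 : CS E L} (h𝒟 : IsStable 𝒟) {Y Y' : Set E} {A : Multiset L}
    (hs : REqStep 𝒟 A Y Y') :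
    Y' ∈ 𝒟.C ∧ Y' ⊆ Y ∧ ∃ F : Finset E, ↑F = Y \ Y' ∧ F.val.map 𝒟.label = A ∧
      (∀ t ∈ Y \ Y', ∀ z ∈ Y, ¬ lt 𝒟 Y t z) := by
  obtain ⟨⟨hY', hY, hsub, F, hF, hco, hmap⟩, heq⟩ := hs
  refine ⟨hY', hsub, F, hF, hmap, ?_⟩
  intro t ht z hz hlt
  have hzt : z ∈ Y \ Y' := by
    by_cases hzY' : z ∈ Y'
    · exact absurd (hlt.1 Y' hY' hsub hzY') ht.2
    · exact ⟨hz, hzY'⟩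
  have h1 : depth 𝒟 Y t = depth 𝒟 Y z := heq t ht z hzt
  have h2 := depth_lt_of_lt h𝒟 hY ht.1 hz hlt
  omega

end CS

open CS

lemma rhesb_symm {E₁ E₂ : Type u} {L : Type v} {𝒞 : CS E₁ L} {𝒟 : CS E₂ L}
    {R : Set E₁ → Set E₂ → Prop} (hR : IsRHESB 𝒞 𝒟 R) :
    IsRHESB 𝒟 𝒞 (fun Y X => R X Y) := by
  obtain ⟨⟨hdom0, hdom⟩, hmain⟩ := hR
  refine ⟨⟨hdom0, fun Y X h => (hdom X Y h).symm⟩, ?_⟩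
  intro Y X h
  obtain ⟨h1, h2, h3, h4⟩ := hmain X Y h
  exact ⟨h2, h1, h4, h3⟩

lemma matched_single {E₁ E₂ : Type u} {L : Type v} {𝒞 : CS E₁ L} {𝒟 : CS E₂ L}
    {R : Set E₁ → Set E₂ → Prop} (h𝒞 : IsStable 𝒞) (h𝒟 : IsStable 𝒟)
    (hR : IsRHESB 𝒞 𝒟 R) {X : Set E₁} {Y : Set E₂} (hXY : R X Y)
    {e : E₁} (he : e ∈ X) (hmax : ∀ z ∈ X, ¬ lt 𝒞 X e z) :
    ∃ u ∈ Y, (∀ z ∈ Y, ¬ lt 𝒟 Y u z) ∧ 𝒟.label u = 𝒞.label e ∧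
      Y \ {u} ∈ 𝒟.C ∧ X \ {e} ∈ 𝒞.C ∧ R (X \ {e}) (Y \ {u}) := by
  classical
  have hX := (hR.1.2 X Y hXY).1
  have hstep := singleton_rstep h𝒞 hX he hmax
  obtain ⟨Y', hYstep, hR'⟩ := ((hR.2 X Y hXY).2.2.1) _ _ (hom_singleton _) hstep
  obtain ⟨hY', hsub, F, hF, hmap, hmaxY⟩ := unpack_rstep h𝒟 hYstep
  have hcard : F.card = 1 := by
    have h := congrArg Multiset.card hmap
    simpa using h
  obtain ⟨u, hu⟩ := Finset.card_eq_one.mp hcard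
  have hYY' : Y \ Y' = {u} := by rw [← hF, hu]; simp
  have huY : u ∈ Y := by
    have : u ∈ Y \ Y' := by rw [hYY']; exact rfl
    exact this.1
  have hY'eq : Y' = Y \ {u} := by rw [← hYY', Set.diff_diff_cancel_left hsub]
  have hlab : 𝒟.label u = 𝒞.label e := by
    rw [hu] at hmap; simpa using hmap
  have hXe : X \ {e} ∈ 𝒞.C := maximal_diff_mem h𝒞 hX (S := {e})
    (fun x hx => by rw [Set.mem_singleton_iff] at hx; subst hx; exact hmax)
  refine ⟨u, huY, ?_, hlab, hY'eq ▸ hY', hXe, hY'eq ▸ hR'⟩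
  intro z hz
  exact hmaxY u (by rw [hYY']; exact rfl) z hz

lemma matched_pair {E₁ E₂ : Type u} {L : Type v} {𝒞 : CS E₁ L} {𝒟 : CS E₂ L}
    {R : Set E₁ → Set E₂ → Prop} (h𝒞 : IsStable 𝒞) (h𝒟 : IsStable 𝒟)
    (hR : IsRHESB 𝒞 𝒟 R) {X : Set E₁} {Y : Set E₂} (hXY : R X Y)
    {x₁ x₂ : E₁} (hx₁ : x₁ ∈ X) (hx₂ : x₂ ∈ X) (hne : x₁ ≠ x₂)
    (hm₁ : ∀ z ∈ X, ¬ lt 𝒞 X x₁ z) (hm₂ : ∀ z ∈ X, ¬ lt 𝒞 X x₂ z)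
    (hdep : depth 𝒞 X x₁ = depth 𝒞 X x₂) (hlab : 𝒞.label x₁ = 𝒞.label x₂) :
    ∃ u₁ u₂, u₁ ≠ u₂ ∧ u₁ ∈ Y ∧ u₂ ∈ Y ∧
      (∀ z ∈ Y, ¬ lt 𝒟 Y u₁ z) ∧ (∀ z ∈ Y, ¬ lt 𝒟 Y u₂ z) := by
  classical
  have hX := (hR.1.2 X Y hXY).1
  have hstep := pair_rstep h𝒞 hX hx₁ hx₂ hne hm₁ hm₂ hdep hlab
  obtain ⟨Y', hYstep, -⟩ := ((hR.2 X Y hXY).2.2.1) _ _ (hom_pair _) hstep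
  obtain ⟨hY', hsub, F, hF, hmap, hmaxY⟩ := unpack_rstep h𝒟 hYstep
  have hcard : F.card = 2 := by
    have h := congrArg Multiset.card hmap
    simpa using h
  obtain ⟨u₁, u₂, hu12, hFeq⟩ := Finset.card_eq_two.mp hcard
  have hu₁ : u₁ ∈ Y \ Y' := by rw [← hF, hFeq]; simp
  have hu₂ : u₂ ∈ Y \ Y' := by rw [← hF, hFeq]; simp
  exact ⟨u₁, u₂, hu12, hu₁.1, hu₂.1, hmaxY u₁ hu₁, hmaxY u₂ hu₂⟩

end Stmt13Aux

section Stmt13Main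

lemma levelLe_empty {E : Type u} {L : Type v} {𝒞 : CS E L} {n : ℕ} :
    levelLe 𝒞 (∅ : Set E) n = ∅ := by
  ext x; simp [CS.mem_levelLe]

lemma census_aux {E₁ E₂ : Type u} {L : Type v} {𝒞 : CS E₁ L} {𝒟 : CS E₂ L}
    (h𝒞 : IsStable 𝒞) (h𝒟 : IsStable 𝒟) {R : Set E₁ → Set E₂ → Prop}
    (hR : IsRHESB 𝒞 𝒟 R) {X : Set E₁} {Y : Set E₂} (hXY : R X Y)
    (IH : ∀ U V, R U V → U.ncard + V.ncard < X.ncard + Y.ncard →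
      ∀ k, (levelLe 𝒞 U k).ncard = (levelLe 𝒟 V k).ncard)
    {e : E₁} (he : e ∈ X) (hemax : ∀ z ∈ X, ¬ lt 𝒞 X e z)
    {m : ℕ} (hm : depth 𝒞 X e < m)
    (hE : ∀ k, (levelLe 𝒞 X k).ncard + CS.chi m k
        = (levelLe 𝒟 Y k).ncard + CS.chi (depth 𝒞 X e) k) :
    False := by
  classical
  have hX := (hR.1.2 X Y hXY).1
  have hY := (hR.1.2 X Y hXY).2
  have hXfin := 𝒞.finite X hX
  have hYfin := 𝒟.finite Y hY
  have hN1 : 1 ≤ depth 𝒞 X e := CS.one_le_depth h𝒞 hX he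
  set N := depth 𝒞 X e with hNdef
  -- matched-removal census equation for any maximal event of X
  have Eeq : ∀ w ∈ X, (∀ z ∈ X, ¬ lt 𝒞 X w z) →
      ∃ u ∈ Y, (∀ z ∈ Y, ¬ lt 𝒟 Y u z) ∧ 𝒟.label u = 𝒞.label w ∧
        (∀ k, (levelLe 𝒞 X k).ncard + CS.chi (depth 𝒟 Y u) k
            = (levelLe 𝒟 Y k).ncard + CS.chi (depth 𝒞 X w) k) := by
    intro w hw hwmax
    obtain ⟨u, huY, humax, hlab, hYu, hXw, hR'⟩ := matched_single h𝒞 h𝒟 hR hXY hw hwmax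
    have hXpos : 1 ≤ X.ncard := (Set.ncard_pos hXfin).mpr ⟨w, hw⟩
    have hYpos : 1 ≤ Y.ncard := (Set.ncard_pos hYfin).mpr ⟨u, huY⟩
    have hcard : (X \ {w}).ncard + (Y \ {u}).ncard < X.ncard + Y.ncard := by
      rw [Set.ncard_diff_singleton_of_mem hw,
        Set.ncard_diff_singleton_of_mem huY]
      omega
    have hIH := IH _ _ hR' hcard
    refine ⟨u, huY, humax, hlab, fun k => ?_⟩
    have e1 := CS.removal_census h𝒞 hX hw hXw k
    have e2 := CS.removal_census h𝒟 hY huY hYu k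
    have e3 := hIH k
    omega
  have claim1 : ∀ w ∈ X, (∀ z ∈ X, ¬ lt 𝒞 X w z) → depth 𝒞 X w = N ∧
      ∃ u ∈ Y, (∀ z ∈ Y, ¬ lt 𝒟 Y u z) ∧ depth 𝒟 Y u = m ∧ 𝒟.label u = 𝒞.label w := by
    intro w hw hwmax
    obtain ⟨u, huY, humax, hlab, hEw⟩ := Eeq w hw hwmax
    have h1 : 1 ≤ depth 𝒟 Y u := CS.one_le_depth h𝒟 hY huY
    have h2 : 1 ≤ depth 𝒞 X w := CS.one_le_depth h𝒞 hX hw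
    obtain ⟨hwN, hum⟩ := CS.chi_key hE hEw (by omega) hN1 h1 h2 (by omega)
    exact ⟨hwN, u, huY, humax, hum, hlab⟩
  have hR2 := rhesb_symm hR
  have claim2 : ∀ v ∈ Y, (∀ z ∈ Y, ¬ lt 𝒟 Y v z) → depth 𝒟 Y v = m := by
    intro v hv hvmax
    obtain ⟨w, hwX, hwmax, hlab, hXw, hYv, hR'⟩ := matched_single h𝒟 h𝒞 hR2 hXY hv hvmax
    have hXpos : 1 ≤ X.ncard := (Set.ncard_pos hXfin).mpr ⟨w, hwX⟩
    have hYpos : 1 ≤ Y.ncard := (Set.ncard_pos hYfin).mpr ⟨v, hv⟩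
    have hcard : (X \ {w}).ncard + (Y \ {v}).ncard < X.ncard + Y.ncard := by
      rw [Set.ncard_diff_singleton_of_mem hwX,
        Set.ncard_diff_singleton_of_mem hv]
      omega
    have hIH := IH _ _ hR' hcard
    have hEv : ∀ k, (levelLe 𝒞 X k).ncard + CS.chi (depth 𝒟 Y v) k
        = (levelLe 𝒟 Y k).ncard + CS.chi (depth 𝒞 X w) k := by
      intro k
      have e1 := CS.removal_census h𝒞 hX hwX hXw k
      have e2 := CS.removal_census h𝒟 hY hv hYv k
      have e3 := hIH k
      omega
    have h1 : 1 ≤ depth 𝒟 Y v := CS.one_le_depth h𝒟 hY hv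
    have h2 : 1 ≤ depth 𝒞 X w := CS.one_le_depth h𝒞 hX hwX
    exact (CS.chi_key hE hEv (by omega) hN1 h1 h2 (by omega)).2
  -- all of X sits at depth ≤ N
  obtain ⟨x₀, hx₀, hx₀max⟩ := Set.exists_max_image X (depth 𝒞 X) hXfin ⟨e, he⟩
  have hx₀m : ∀ z ∈ X, ¬ lt 𝒞 X x₀ z := CS.maximal_of_depth_max h𝒞 hX hx₀ hx₀max
  have hx₀N : depth 𝒞 X x₀ = N := (claim1 x₀ hx₀ hx₀m).1
  have hNmax : ∀ x ∈ X, depth 𝒞 X x ≤ N := fun x hx => hx₀N ▸ hx₀max x hx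
  obtain ⟨u₀, hu₀Y, hu₀max, hu₀m, -⟩ := (claim1 e he hemax).2
  have hAfull : ∀ k, N ≤ k → levelLe 𝒞 X k = X := by
    intro k hk
    ext x
    exact ⟨fun h => h.1, fun h => ⟨h, le_trans (hNmax x h) hk⟩⟩
  -- Y has exactly one event at depth m
  have hBm : (levelLe 𝒟 Y m).ncard = (levelLe 𝒟 Y (m - 1)).ncard + 1 := by
    have e1 := hE m
    have e2 := hE (m - 1)
    rw [hAfull m (by omega)] at e1
    rw [hAfull (m - 1) (by omega)] at e2
    rw [CS.chi_of_le (le_refl m), CS.chi_of_le (show N ≤ m by omega)] at e1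
    rw [CS.chi_of_gt (show m - 1 < m by omega), CS.chi_of_le (show N ≤ m - 1 by omega)] at e2
    omega
  have hpartYm := CS.census_partition h𝒟 hY m (by omega)
  have hEqYm : (levelEq 𝒟 Y m).ncard = 1 := by omega
  obtain ⟨v₀, hv₀⟩ := Set.ncard_eq_one.mp hEqYm
  have hv₀mem : v₀ ∈ levelEq 𝒟 Y m := by rw [hv₀]; rfl
  have hmaxY_eq : ∀ v ∈ Y, (∀ z ∈ Y, ¬ lt 𝒟 Y v z) → v = v₀ := by
    intro v hv hvmax
    have hd := claim2 v hv hvmax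
    have hmem : v ∈ levelEq 𝒟 Y m := ⟨hv, hd⟩
    rw [hv₀] at hmem
    exact hmem
  have hmaxdepthN : ∀ x ∈ X, depth 𝒞 X x = N → (∀ z ∈ X, ¬ lt 𝒞 X x z) := by
    intro x hx hd z hz hlt
    have h1 := CS.depth_lt_of_lt h𝒞 hX hx hz hlt
    have h2 := hNmax z hz
    omega
  have hlab_v₀ : ∀ w ∈ X, (∀ z ∈ X, ¬ lt 𝒞 X w z) → 𝒞.label w = 𝒟.label v₀ := by
    intro w hw hwmax
    obtain ⟨-, u, huY, humax, -, hlab⟩ := claim1 w hw hwmax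
    rw [← hlab, hmaxY_eq u huY humax]
  -- X has exactly one event at depth N
  have hlevEqXN : levelEq 𝒞 X N = {e} := by
    ext x
    simp only [CS.mem_levelEq, Set.mem_singleton_iff]
    constructor
    · rintro ⟨hx, hd⟩
      by_contra hxe
      have hxmax := hmaxdepthN x hx hd
      have hlabx : 𝒞.label x = 𝒞.label e :=
        (hlab_v₀ x hx hxmax).trans (hlab_v₀ e he hemax).symm
      obtain ⟨u₁, u₂, hu12, hu₁Y, hu₂Y, hmu₁, hmu₂⟩ :=
        matched_pair h𝒞 h𝒟 hR hXY hx he hxe hxmax hemax (hd.trans hNdef) hlabx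
      exact hu12 ((hmaxY_eq u₁ hu₁Y hmu₁).trans (hmaxY_eq u₂ hu₂Y hmu₂).symm)
    · rintro rfl
      exact ⟨he, hNdef.symm⟩
  have hpartXN := CS.census_partition h𝒞 hX N hN1
  have hAN : (levelLe 𝒞 X N).ncard = (levelLe 𝒞 X (N - 1)).ncard + 1 := by
    rw [hlevEqXN] at hpartXN
    simpa using hpartXN
  have hBN : (levelLe 𝒟 Y N).ncard = (levelLe 𝒟 Y (N - 1)).ncard := by
    have e1 := hE N
    have e2 := hE (N - 1)
    rw [CS.chi_of_gt (show N < m by omega), CS.chi_of_le (le_refl N)] at e1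
    rw [CS.chi_of_gt (show N - 1 < m by omega), CS.chi_of_gt (show N - 1 < N by omega)] at e2
    omega
  have hpartYN := CS.census_partition h𝒟 hY N hN1
  have hEqYN : (levelEq 𝒟 Y N).ncard = 0 := by omega
  obtain ⟨y, hyY, hyd⟩ := CS.exists_depth_between h𝒟 hY (depth 𝒟 Y v₀) v₀ hv₀mem.1 rfl N hN1
    (by rw [hv₀mem.2]; omega)
  have hfinEq : (levelEq 𝒟 Y N).Finite := hYfin.subset (fun t ht => ht.1)
  rw [Set.ncard_eq_zero hfinEq] at hEqYN
  have hymem : y ∈ levelEq 𝒟 Y N := ⟨hyY, hyd⟩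
  rw [hEqYN] at hymem
  exact hymem

lemma census_all {E₁ E₂ : Type u} {L : Type v} {𝒞 : CS E₁ L} {𝒟 : CS E₂ L}
    (h𝒞 : IsStable 𝒞) (h𝒟 : IsStable 𝒟) {R : Set E₁ → Set E₂ → Prop}
    (hR : IsRHESB 𝒞 𝒟 R) :
    ∀ s (X : Set E₁) (Y : Set E₂), R X Y → X.ncard + Y.ncard ≤ s →
      ∀ k, (levelLe 𝒞 X k).ncard = (levelLe 𝒟 Y k).ncard := by
  intro s
  induction s using Nat.strong_induction_on with
  | _ s ihs =>
  intro X Y hXY hcard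
  have hX := (hR.1.2 X Y hXY).1
  have hY := (hR.1.2 X Y hXY).2
  have hXfin := 𝒞.finite X hX
  have hYfin := 𝒟.finite Y hY
  have IH : ∀ U V, R U V → U.ncard + V.ncard < X.ncard + Y.ncard →
      ∀ k, (levelLe 𝒞 U k).ncard = (levelLe 𝒟 V k).ncard := by
    intro U V hUV hlt k'
    exact ihs (U.ncard + V.ncard) (by omega) U V hUV le_rfl k'
  rcases X.eq_empty_or_nonempty with rfl | hXne
  · have hYe : Y = ∅ := by
      by_contra hYne
      have hYne' : Y.Nonempty := Set.nonempty_iff_ne_empty.mpr hYne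
      obtain ⟨y₀, hy₀, hy₀max⟩ := Set.exists_max_image Y (depth 𝒟 Y) hYfin hYne'
      have hmax := CS.maximal_of_depth_max h𝒟 hY hy₀ hy₀max
      obtain ⟨w, hwX, -⟩ := matched_single h𝒟 h𝒞 (rhesb_symm hR) hXY hy₀ hmax
      exact hwX
    subst hYe
    intro k
    rw [(levelLe_empty : levelLe 𝒞 (∅ : Set E₁) k = ∅), (levelLe_empty : levelLe 𝒟 (∅ : Set E₂) k = ∅),
      Set.ncard_empty, Set.ncard_empty]
  · obtain ⟨e, he, hemax'⟩ := Set.exists_max_image X (depth 𝒞 X) hXfin hXne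
    have hemax := CS.maximal_of_depth_max h𝒞 hX he hemax'
    obtain ⟨u, huY, humax, hlab, hYu, hXe, hR'⟩ := matched_single h𝒞 h𝒟 hR hXY he hemax
    have hXpos : 1 ≤ X.ncard := (Set.ncard_pos hXfin).mpr ⟨e, he⟩
    have hYpos : 1 ≤ Y.ncard := (Set.ncard_pos hYfin).mpr ⟨u, huY⟩
    have hcard' : (X \ {e}).ncard + (Y \ {u}).ncard < X.ncard + Y.ncard := by
      rw [Set.ncard_diff_singleton_of_mem he,
        Set.ncard_diff_singleton_of_mem huY]
      omega
    have hIH' := IH _ _ hR' hcard'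
    have hEe : ∀ k, (levelLe 𝒞 X k).ncard + CS.chi (depth 𝒟 Y u) k
        = (levelLe 𝒟 Y k).ncard + CS.chi (depth 𝒞 X e) k := by
      intro k
      have e1 := CS.removal_census h𝒞 hX he hXe k
      have e2 := CS.removal_census h𝒟 hY huY hYu k
      have e3 := hIH' k
      omega
    rcases lt_trichotomy (depth 𝒞 X e) (depth 𝒟 Y u) with h | h | h
    · exact (census_aux h𝒞 h𝒟 hR hXY IH he hemax h hEe).elim
    · intro k
      have heq := hEe k
      rw [h] at heq
      omega
    · have IH2 : ∀ U V, R V U → U.ncard + V.ncard < Y.ncard + X.ncard →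
          ∀ k, (levelLe 𝒟 U k).ncard = (levelLe 𝒞 V k).ncard := by
        intro U V hVU hlt k'
        exact (IH V U hVU (by omega) k').symm
      have hE2 : ∀ k, (levelLe 𝒟 Y k).ncard + CS.chi (depth 𝒞 X e) k
          = (levelLe 𝒞 X k).ncard + CS.chi (depth 𝒟 Y u) k := fun k => (hEe k).symm
      exact (census_aux h𝒟 h𝒞 (rhesb_symm hR) hXY IH2 huY humax h hE2).elim

end Stmt13Main

/-- an RHESB relates the depth-at-most-`n` truncations of related
configurations. -/
theorem stmt13 {E₁ E₂ : Type u} {L : Type v} (𝒞 : CS E₁ L) (𝒟 : CS E₂ L)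
    (h𝒞 : IsStable 𝒞) (h𝒟 : IsStable 𝒟)
    (R : Set E₁ → Set E₂ → Prop) (hR : IsRHESB 𝒞 𝒟 R)
    (X : Set E₁) (Y : Set E₂) (hXY : R X Y) :
    ∀ n : ℕ, R (levelLe 𝒞 X n) (levelLe 𝒟 Y n) := by
  classical
  suffices H : ∀ s (X : Set E₁) (Y : Set E₂), R X Y → X.ncard + Y.ncard ≤ s →
      ∀ n : ℕ, R (levelLe 𝒞 X n) (levelLe 𝒟 Y n) by
    intro n
    exact H (X.ncard + Y.ncard) X Y hXY le_rfl n
  clear hXY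
  intro s
  induction s using Nat.strong_induction_on with
  | _ s ihs =>
  intro X Y hXY hcard n
  have hX := (hR.1.2 X Y hXY).1
  have hY := (hR.1.2 X Y hXY).2
  have hXfin := 𝒞.finite X hX
  have hYfin := 𝒟.finite Y hY
  have hcensus := census_all h𝒞 h𝒟 hR (X.ncard + Y.ncard) X Y hXY le_rfl
  by_cases hall : ∀ x ∈ X, depth 𝒞 X x ≤ n
  · have hXeq : levelLe 𝒞 X n = X := by
      ext x; exact ⟨fun h => h.1, fun h => ⟨h, hall x h⟩⟩
    have hYeq : levelLe 𝒟 Y n = Y := by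
      rcases Y.eq_empty_or_nonempty with rfl | hYne
      · exact levelLe_empty
      · obtain ⟨y₀, hy₀, hy₀max⟩ := Set.exists_max_image Y (depth 𝒟 Y) hYfin hYne
        set K := max n (depth 𝒟 Y y₀) with hK
        have hYK : levelLe 𝒟 Y K = Y := by
          ext y
          exact ⟨fun h => h.1, fun h => ⟨h, le_trans (hy₀max y h) (le_max_right _ _)⟩⟩
        have hXK : levelLe 𝒞 X K = X := by
          ext x
          exact ⟨fun h => h.1, fun h => ⟨h, le_trans (hall x h) (le_max_left _ _)⟩⟩
        have hcard1 := hcensus K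
        rw [hXK, hYK] at hcard1
        have hcard2 := hcensus n
        rw [hXeq] at hcard2
        exact Set.eq_of_subset_of_ncard_le (fun y hy => hy.1) (by omega) hYfin
    rw [hXeq, hYeq]
    exact hXY
  · push_neg at hall
    obtain ⟨x, hx, hxn⟩ := hall
    obtain ⟨e, he, hemax'⟩ := Set.exists_max_image X (depth 𝒞 X) hXfin ⟨x, hx⟩
    have hemax := CS.maximal_of_depth_max h𝒞 hX he hemax'
    have hen : n < depth 𝒞 X e := lt_of_lt_of_le hxn (hemax' x hx)
    obtain ⟨u, huY, humax, hlab, hYu, hXe, hR'⟩ := matched_single h𝒞 h𝒟 hR hXY he hemax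
    have hXpos : 1 ≤ X.ncard := (Set.ncard_pos hXfin).mpr ⟨e, he⟩
    have hYpos : 1 ≤ Y.ncard := (Set.ncard_pos hYfin).mpr ⟨u, huY⟩
    have hcard' : (X \ {e}).ncard + (Y \ {u}).ncard < X.ncard + Y.ncard := by
      rw [Set.ncard_diff_singleton_of_mem he,
        Set.ncard_diff_singleton_of_mem huY]
      omega
    have hcensus' := census_all h𝒞 h𝒟 hR ((X \ {e}).ncard + (Y \ {u}).ncard) _ _ hR' le_rfl
    have hdepu : depth 𝒟 Y u = depth 𝒞 X e := by
      apply CS.chi_inj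
      intro k
      have e1 := CS.removal_census h𝒞 hX he hXe k
      have e2 := CS.removal_census h𝒟 hY huY hYu k
      have e3 := hcensus k
      have e4 := hcensus' k
      omega
    have hrec := ihs ((X \ {e}).ncard + (Y \ {u}).ncard) (by omega) _ _ hR' le_rfl n
    have hXtr : levelLe 𝒞 (X \ {e}) n = levelLe 𝒞 X n := by
      rw [CS.levelLe_subcfg h𝒞 hX hXe Set.diff_subset]
      ext z
      simp only [Set.mem_inter_iff, Set.mem_diff, Set.mem_singleton_iff, CS.mem_levelLe]
      constructor
      · rintro ⟨h1, -⟩; exact h1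
      · intro h1
        refine ⟨h1, h1.1, ?_⟩
        rintro rfl
        have := h1.2
        omega
    have hYtr : levelLe 𝒟 (Y \ {u}) n = levelLe 𝒟 Y n := by
      rw [CS.levelLe_subcfg h𝒟 hY hYu Set.diff_subset]
      ext z
      simp only [Set.mem_inter_iff, Set.mem_diff, Set.mem_singleton_iff, CS.mem_levelLe]
      constructor
      · rintro ⟨h1, -⟩; exact h1
      · intro h1
        refine ⟨h1, h1.1, ?_⟩
        rintro rfl
        have h2 := h1.2
        rw [hdepu] at h2
        omega
    rw [← hXtr, ← hYtr]
    exact hrec
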